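/- The assignment 𝒫 ↦ cave_𝒫(t_1,…,t_p) of the cave polynomial to a polymatroid is valuative: for any polymatroids 𝒫_1,…,𝒫_k on [p] with cage m and any integers a_1,…,a_k such that Σ_{i=1}^{k} a_i · 1_{B(𝒫_i)}(v) = 0 for all v ∈ ℝ^p, one has Σ_{i=1}^{k} a_i · cave_{𝒫_i}(t_1,…,t_p) = 0 in ℤ[t_1,…,t_p]. -/

import Mathlib

open scoped BigOperators

attribute [local instance] Classical.propDecidable

namespace CavePaper

variable {p : ℕ}

/-- `rk` is the rank function of a polymatroid on `[p]` with cage `m`: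
normalized, monotone, submodular, and `rk {i} ≤ m i` for all `i`. -/
def IsPolymatroid (m : Fin p → ℕ) (rk : Finset (Fin p) → ℕ) : Prop :=
  rk ∅ = 0 ∧
    (∀ J₁ J₂ : Finset (Fin p), J₁ ⊆ J₂ → rk J₁ ≤ rk J₂) ∧
    (∀ J₁ J₂ : Finset (Fin p), rk (J₁ ∩ J₂) + rk (J₁ ∪ J₂) ≤ rk J₁ + rk J₂) ∧
    (∀ i : Fin p, rk {i} ≤ m i)

/-- An integer point lies in the independence polytope `I(𝒫)`. -/
def inIndep (rk : Finset (Fin p) → ℕ) (v : Fin p → ℤ) : Prop :=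
  (∀ i, 0 ≤ v i) ∧ ∀ J : Finset (Fin p), ∑ j ∈ J, v j ≤ (rk J : ℤ)

/-- An integer point lies in the base polytope `B(𝒫)`. -/
def inBase (rk : Finset (Fin p) → ℕ) (v : Fin p → ℤ) : Prop :=
  inIndep rk v ∧ ∑ i, v i = (rk Finset.univ : ℤ)

/-- The indicator function `1_𝒫` of the base polytope, at integer points. -/
noncomputable def baseInd (rk : Finset (Fin p) → ℕ) (v : Fin p → ℤ) : ℤ :=
  if inBase rk v then 1 else 0

/-- `max_{i<j} 1_𝒫(n - e_i + e_j)`. -/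
noncomputable def cmax (rk : Finset (Fin p) → ℕ) (n : Fin p → ℕ) (i : Fin p) : ℤ :=
  if ∃ j, i < j ∧ inBase rk
      (fun k => (n k : ℤ) - (if k = i then 1 else 0) + (if k = j then 1 else 0))
    then 1 else 0

/-- The cave polynomial of a polymatroid: the expansion of
`∑_{n ∈ ℕ^p, |n| = rk(𝒫)} 1_𝒫(n) ∏_{i=1}^{p-1} (1 - max_{i<j} 1_𝒫(n-e_i+e_j) tᵢ⁻¹) tⁿ`.
Each factor `(1 - cᵢ tᵢ⁻¹) tᵢ^{nᵢ}` is written as `tᵢ^{nᵢ} - cᵢ tᵢ^{nᵢ-1}`, which is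
legitimate since `cᵢ ≠ 0` forces `nᵢ ≥ 1`; the factor for the last index is `tᵢ^{nᵢ}`. -/
noncomputable def cavePoly (rk : Finset (Fin p) → ℕ) : MvPolynomial (Fin p) ℤ :=
  ∑ n ∈ Finset.Nat.antidiagonalTuple p (rk Finset.univ),
    MvPolynomial.C (baseInd rk (fun i => (n i : ℤ))) *
      ∏ i : Fin p,
        if (i : ℕ) < p - 1 then
          MvPolynomial.X i ^ (n i) -
            MvPolynomial.C (cmax rk n i) * MvPolynomial.X i ^ (n i - 1)
        else MvPolynomial.X i ^ (n i)

/-- A set `S ⊆ ℤ^q` is M-convex: it is nonempty, finite, and satisfies the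
symmetric exchange property. -/
def MConvex {q : ℕ} (S : Set (Fin q → ℤ)) : Prop :=
  S.Nonempty ∧ S.Finite ∧
    ∀ u ∈ S, ∀ v ∈ S, ∀ i, v i < u i →
      ∃ j, u j < v j ∧
        (fun k => u k - (if k = i then 1 else 0) + (if k = j then 1 else 0)) ∈ S

/-- The Möbius function `μ_𝒫 : ℤ^p → ℤ` of a polymatroid: `0` outside `I(𝒫)`,
`1` on `B(𝒫)`, and `1 - ∑_{w ∈ (n + ℤ_{>0}^p) ∩ I(𝒫)} μ_𝒫(w)` on `I(𝒫) \ B(𝒫)`.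
(Every integer point of `I(𝒫)` lies in the box `0 ≤ w i ≤ rk {i}`; the redundant
condition `∑ n < ∑ w` — automatic for `p ≥ 1` — ensures termination.) -/
noncomputable def mobius (rk : Finset (Fin p) → ℕ) (n : Fin p → ℤ) : ℤ :=
  if inIndep rk n then
    if inBase rk n then 1
    else
      1 - ∑ w ∈ ((Finset.Icc (fun _ => (0 : ℤ)) (fun i => (rk {i} : ℤ))).filter
            (fun w => (∀ i, n i < w i) ∧ (∑ i, n i) < (∑ i, w i) ∧ inIndep rk w)).attach,
          mobius rk w.1
  else 0
termination_by ((rk Finset.univ : ℤ) - ∑ i, n i).toNat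
decreasing_by
  have hm := w.2
  simp only [Finset.mem_filter] at hm
  have h2 : (∑ i, w.1 i) ≤ (rk Finset.univ : ℤ) := by
    simpa using hm.2.2.2.2 Finset.univ
  have _h1 : (∑ i, n i) < ∑ i, w.1 i := hm.2.2.1
  omega

/-- The base polytope `B(𝒫) ⊆ ℝ^p`. -/
def BaseSet (rk : Finset (Fin p) → ℕ) : Set (Fin p → ℝ) :=
  {v | (∀ i, 0 ≤ v i) ∧ (∑ i, v i = (rk Finset.univ : ℝ)) ∧
    ∀ J : Finset (Fin p), ∑ j ∈ J, v j ≤ (rk J : ℝ)}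

/-- The rank function `rk_S(J) = max_{u ∈ S} ∑_{j∈J} u_j` of a (finite, nonempty)
M-convex set `S ⊆ ℕ^p`. -/
noncomputable def rkOf (S : Set (Fin p → ℤ)) (J : Finset (Fin p)) : ℕ :=
  sSup ((fun u => (∑ j ∈ J, u j).toNat) '' S)


/-- 1-D Euler-characteristic extraction: if an integer combination of indicator functions of
closed intervals vanishes identically on `ℝ`, then the combination of their
nonemptiness indicators vanishes. -/
lemma oneDim {k : ℕ} (a : Fin k → ℤ) (I : Fin k → Set ℝ) (u v : Fin k → ℝ)
    (hI : ∀ i, I i = ∅ ∨ (u i ≤ v i ∧ I i = Set.Icc (u i) (v i)))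
    (h : ∀ t : ℝ, ∑ i, a i * (if t ∈ I i then 1 else 0) = 0) :
    ∑ i, a i * (if (I i).Nonempty then 1 else 0) = 0 := by
  classical
  set A : Finset ℝ := Finset.univ.biUnion (fun i : Fin k => {u i, v i}) with hA
  have huA : ∀ i, u i ∈ A := fun i => Finset.mem_biUnion.2 ⟨i, Finset.mem_univ i, by simp⟩
  have hvA : ∀ i, v i ∈ A := fun i => Finset.mem_biUnion.2 ⟨i, Finset.mem_univ i, by simp⟩
  set σ : ℝ → ℝ := fun x =>
    if h : ((A.filter (fun y => x < y)).Nonempty) then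
      (x + (A.filter (fun y => x < y)).min' h) / 2
    else x + 1 with hσ
  have P1 : ∀ x, x < σ x := by
    intro x
    rw [hσ]
    by_cases hne : ((A.filter (fun y => x < y)).Nonempty)
    · simp only [hne, dif_pos]
      have := (A.filter (fun y => x < y)).min'_mem hne
      rw [Finset.mem_filter] at this
      linarith [this.2]
    · simp only [hne, dif_neg, not_false_iff]
      linarith
  have P2 : ∀ x z, z ∈ A → x < z → σ x < z := by
    intro x z hzA hxz
    have hne : ((A.filter (fun y => x < y)).Nonempty) := ⟨z, Finset.mem_filter.2 ⟨hzA, hxz⟩⟩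
    rw [hσ]
    simp only [hne, dif_pos]
    have h1 : (A.filter (fun y => x < y)).min' hne ≤ z :=
      Finset.min'_le _ _ (Finset.mem_filter.2 ⟨hzA, hxz⟩)
    have h2 := (A.filter (fun y => x < y)).min'_mem hne
    rw [Finset.mem_filter] at h2
    have := h2.2
    linarith
  have key : ∀ i, (∑ x ∈ A, ((if x ∈ I i then (1:ℤ) else 0) - (if σ x ∈ I i then 1 else 0)))
      = if (I i).Nonempty then 1 else 0 := by
    intro i
    rcases hI i with hemp | ⟨huv, hIcc⟩
    · simp [hemp]
    · have hne : (I i).Nonempty := by rw [hIcc]; exact Set.nonempty_Icc.2 huv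
      rw [if_pos hne, Finset.sum_sub_distrib]
      rw [Finset.sum_boole, Finset.sum_boole]
      have hF : (A.filter (fun x => σ x ∈ I i)) = (A.filter (fun x => x ∈ I i)).erase (v i) := by
        ext x
        simp only [Finset.mem_filter, Finset.mem_erase, hIcc, Set.mem_Icc]
        constructor
        · rintro ⟨hxA, h1, h2⟩
          have hxv : x < v i := lt_of_lt_of_le (P1 x) h2
          refine ⟨ne_of_lt hxv, hxA, ?_, le_of_lt hxv⟩
          by_contra hux
          push_neg at hux
          have := P2 x (u i) (huA i) hux
          linarith
        · rintro ⟨hne', ⟨hxA, hux, hxv⟩⟩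
          have hxv' : x < v i := lt_of_le_of_ne hxv hne'
          exact ⟨hxA, le_trans hux (le_of_lt (P1 x)), le_of_lt (P2 x (v i) (hvA i) hxv')⟩
      rw [hF]
      have hv1 : v i ∈ A.filter (fun x => x ∈ I i) := by
        rw [Finset.mem_filter, hIcc, Set.mem_Icc]
        exact ⟨hvA i, huv, le_refl _⟩
      rw [Finset.card_erase_of_mem hv1]
      have h1c : 1 ≤ (A.filter (fun x => x ∈ I i)).card := Finset.card_pos.2 ⟨v i, hv1⟩
      push_cast [Nat.cast_sub h1c]
      ring
  calc ∑ i, a i * (if (I i).Nonempty then 1 else 0)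
      = ∑ i, a i * (∑ x ∈ A, ((if x ∈ I i then (1:ℤ) else 0) - (if σ x ∈ I i then 1 else 0))) := by
        refine Finset.sum_congr rfl fun i _ => ?_
        rw [key i]
    _ = ∑ i, ∑ x ∈ A, (a i * (if x ∈ I i then (1:ℤ) else 0) - a i * (if σ x ∈ I i then 1 else 0)) := by
        refine Finset.sum_congr rfl fun i _ => ?_
        rw [Finset.mul_sum]
        exact Finset.sum_congr rfl fun x _ => by ring
    _ = ∑ x ∈ A, ∑ i, (a i * (if x ∈ I i then (1:ℤ) else 0) - a i * (if σ x ∈ I i then 1 else 0)) :=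
        Finset.sum_comm
    _ = 0 := by
        refine Finset.sum_eq_zero fun x _ => ?_
        rw [Finset.sum_sub_distrib, h x, h (σ x), sub_zero]


/-- Euler-characteristic machine: a vanishing integer combination of indicator functions of
compact convex sets yields a vanishing combination of nonemptiness indicators. -/
lemma chiMachine : ∀ (q k : ℕ) (a : Fin k → ℤ) (Q : Fin k → Set (Fin q → ℝ)),
    (∀ i, Convex ℝ (Q i)) → (∀ i, IsCompact (Q i)) →
    (∀ x, ∑ i, a i * (if x ∈ Q i then 1 else 0) = 0) →
    ∑ i, a i * (if (Q i).Nonempty then 1 else 0) = 0 := by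
  intro q
  induction q with
  | zero =>
    intro k a Q hconv hcomp h
    have h0 := h (fun _ => 0)
    calc ∑ i, a i * (if (Q i).Nonempty then 1 else 0)
        = ∑ i, a i * (if (fun _ => (0:ℝ)) ∈ Q i then 1 else 0) := by
          refine Finset.sum_congr rfl fun i _ => ?_
          congr 1
          apply if_congr _ rfl rfl
          constructor
          · rintro ⟨y, hy⟩
            have : y = (fun _ => (0:ℝ)) := by funext j; exact j.elim0
            rwa [this] at hy
          · intro hy; exact ⟨_, hy⟩
      _ = 0 := h0
  | succ q IH =>
    intro k a Q hconv hcomp h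
    set I : Fin k → Set ℝ := fun i => (fun x : Fin (q+1) → ℝ => x (Fin.last q)) '' Q i with hIdef
    -- continuity of snoc
    have hsnoc_cont : ∀ t : ℝ, Continuous (fun y : Fin q → ℝ => (Fin.snoc y t : Fin (q+1) → ℝ)) := by
      intro t
      refine continuous_pi fun j => ?_
      refine Fin.lastCases ?_ ?_ j
      · simpa [Fin.snoc_last] using continuous_const
      · intro j'
        simpa [Fin.snoc_castSucc] using continuous_apply j'
    -- slice relation
    have hslice : ∀ t : ℝ, ∑ i, a i * (if t ∈ I i then 1 else 0) = 0 := by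
      intro t
      set Qt : Fin k → Set (Fin q → ℝ) := fun i => {y | (Fin.snoc y t : Fin (q+1) → ℝ) ∈ Q i} with hQt
      have hmem : ∀ i, (t ∈ I i) ↔ (Qt i).Nonempty := by
        intro i
        constructor
        · rintro ⟨x, hx, hxt⟩
          refine ⟨fun j => x (Fin.castSucc j), ?_⟩
          have : (Fin.snoc (fun j => x (Fin.castSucc j)) t : Fin (q+1) → ℝ) = x := by
            funext j
            refine Fin.lastCases ?_ ?_ j
            · rw [Fin.snoc_last]; exact hxt.symm
            · intro j'; rw [Fin.snoc_castSucc]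
          simpa [hQt, Set.mem_setOf_eq, this] using hx
        · rintro ⟨y, hy⟩
          exact ⟨(Fin.snoc y t : Fin (q+1) → ℝ), hy, Fin.snoc_last _ _⟩
      have hconv' : ∀ i, Convex ℝ (Qt i) := by
        intro i x hx y hy α β hα hβ hαβ
        have hkey : (Fin.snoc (α • x + β • y) t : Fin (q+1) → ℝ)
            = α • (Fin.snoc x t : Fin (q+1) → ℝ) + β • (Fin.snoc y t : Fin (q+1) → ℝ) := by
          funext j
          refine Fin.lastCases ?_ ?_ j
          · simp only [Fin.snoc_last, Pi.add_apply, Pi.smul_apply, smul_eq_mul]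
            rw [← add_mul, hαβ, one_mul]
          · intro j'
            simp [Fin.snoc_castSucc]
        show (Fin.snoc (α • x + β • y) t : Fin (q+1) → ℝ) ∈ Q i
        rw [hkey]
        exact hconv i hx hy hα hβ hαβ
      have hcomp' : ∀ i, IsCompact (Qt i) := by
        intro i
        have hcl : IsClosed (Qt i) := (hcomp i).isClosed.preimage (hsnoc_cont t)
        obtain ⟨C, hC⟩ := (Metric.isBounded_iff_subset_closedBall 0).1 (hcomp i).isBounded
        refine Metric.isCompact_of_isClosed_isBounded hcl ?_
        rw [Metric.isBounded_iff_subset_closedBall 0]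
        refine ⟨max C 0, fun y hy => ?_⟩
        have hx := hC hy
        simp only [Metric.mem_closedBall, dist_zero_right] at hx ⊢
        refine (pi_norm_le_iff_of_nonneg (le_max_right C 0)).2 fun j => ?_
        calc ‖y j‖ = ‖(Fin.snoc y t : Fin (q+1) → ℝ) (Fin.castSucc j)‖ := by
              rw [Fin.snoc_castSucc]
          _ ≤ ‖(Fin.snoc y t : Fin (q+1) → ℝ)‖ := norm_le_pi_norm _ _
          _ ≤ C := hx
          _ ≤ max C 0 := le_max_left _ _
      have := IH k a Qt hconv' hcomp' (fun y => h (Fin.snoc y t : Fin (q+1) → ℝ))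
      calc ∑ i, a i * (if t ∈ I i then 1 else 0)
          = ∑ i, a i * (if (Qt i).Nonempty then 1 else 0) := by
            refine Finset.sum_congr rfl fun i _ => ?_
            congr 1
            exact if_congr (hmem i) rfl rfl
        _ = 0 := this
    -- endpoints
    have hIcc : ∀ i, I i = ∅ ∨ (sInf (I i) ≤ sSup (I i) ∧ I i = Set.Icc (sInf (I i)) (sSup (I i))) := by
      intro i
      by_cases hne : (Q i).Nonempty
      · right
        have hInee : (I i).Nonempty := hne.image _
        have hIc : IsCompact (I i) := (hcomp i).image (continuous_apply _)
        have hIconv : Convex ℝ (I i) := by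
          have := (hconv i).linear_image (LinearMap.proj (R := ℝ) (φ := fun _ : Fin (q+1) => ℝ) (Fin.last q))
          simpa [hIdef, LinearMap.proj_apply] using this
        have h1 : sInf (I i) ∈ I i := hIc.sInf_mem hInee
        have h2 : sSup (I i) ∈ I i := hIc.sSup_mem hInee
        have hle : sInf (I i) ≤ sSup (I i) := csInf_le_csSup hInee hIc.bddBelow hIc.bddAbove
        refine ⟨hle, le_antisymm ?_ ?_⟩
        · intro x hx
          exact Set.mem_Icc.2 ⟨csInf_le hIc.bddBelow hx, le_csSup hIc.bddAbove hx⟩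
        · exact hIconv.ordConnected.out h1 h2
      · left
        rw [Set.not_nonempty_iff_eq_empty] at hne
        simp [hIdef, hne]
    have := oneDim a I (fun i => sInf (I i)) (fun i => sSup (I i)) hIcc hslice
    calc ∑ i, a i * (if (Q i).Nonempty then 1 else 0)
        = ∑ i, a i * (if (I i).Nonempty then 1 else 0) := by
          refine Finset.sum_congr rfl fun i _ => ?_
          congr 1
          refine if_congr ?_ rfl rfl
          refine ⟨fun hn => hn.image _, fun hn => ?_⟩
          obtain ⟨x', hx'⟩ := hn
          obtain ⟨y, hy, -⟩ := hx'
          exact ⟨y, hy⟩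
      _ = 0 := this


/-! ### tight set machinery -/

section Tight
variable {m : Fin p → ℕ} {rk : Finset (Fin p) → ℕ}

lemma tight_union (hrk : IsPolymatroid m rk) {n : Fin p → ℕ}
    (hind : ∀ J : Finset (Fin p), ∑ k ∈ J, (n k : ℤ) ≤ (rk J : ℤ))
    {J₁ J₂ : Finset (Fin p)}
    (h1 : ∑ k ∈ J₁, (n k : ℤ) = rk J₁) (h2 : ∑ k ∈ J₂, (n k : ℤ) = rk J₂) :
    ∑ k ∈ J₁ ∪ J₂, (n k : ℤ) = rk (J₁ ∪ J₂) := by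
  have hmod : ∑ k ∈ J₁ ∪ J₂, (n k : ℤ) + ∑ k ∈ J₁ ∩ J₂, (n k : ℤ)
      = ∑ k ∈ J₁, (n k : ℤ) + ∑ k ∈ J₂, (n k : ℤ) := Finset.sum_union_inter
  have hsub : (rk (J₁ ∩ J₂) : ℤ) + rk (J₁ ∪ J₂) ≤ (rk J₁ : ℤ) + rk J₂ := by
    exact_mod_cast hrk.2.2.1 J₁ J₂
  have hu := hind (J₁ ∪ J₂)
  have hi := hind (J₁ ∩ J₂)
  omega

lemma tight_biUnion (hrk : IsPolymatroid m rk) {n : Fin p → ℕ}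
    (hind : ∀ J : Finset (Fin p), ∑ k ∈ J, (n k : ℤ) ≤ (rk J : ℤ))
    (A : Finset (Fin p)) (g : Fin p → Finset (Fin p))
    (hg : ∀ b ∈ A, ∑ k ∈ g b, (n k : ℤ) = rk (g b)) :
    ∑ k ∈ A.biUnion g, (n k : ℤ) = rk (A.biUnion g) := by
  classical
  induction A using Finset.induction_on with
  | empty => simp [hrk.1]
  | @insert b A' hb ih =>
    rw [Finset.biUnion_insert]
    exact tight_union hrk hind (hg b (Finset.mem_insert_self b A'))
      (ih fun b' hb' => hg b' (Finset.mem_insert_of_mem hb'))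

/-- If `n ∈ B` but the exchange `n - e_i + e_j` is not in `B` (and `n i ≥ 1`), then there is a
tight set containing `j` but not `i`. -/
lemma exchange_tight (hrk : IsPolymatroid m rk) {n : Fin p → ℕ}
    (hB : inBase rk (fun k => (n k : ℤ))) {i j : Fin p} (hij : i ≠ j) (hni : 1 ≤ n i)
    (hnot : ¬ inBase rk
      (fun k => (n k : ℤ) - (if k = i then 1 else 0) + (if k = j then 1 else 0))) :
    ∃ J : Finset (Fin p), j ∈ J ∧ i ∉ J ∧ ∑ k ∈ J, (n k : ℤ) = rk J := by
  classical
  by_contra hJ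
  push_neg at hJ
  apply hnot
  set w : Fin p → ℤ := fun k => (n k : ℤ) - (if k = i then 1 else 0) + (if k = j then 1 else 0)
    with hw
  have hsum : ∀ J : Finset (Fin p), ∑ k ∈ J, w k
      = ∑ k ∈ J, (n k : ℤ) - (if i ∈ J then 1 else 0) + (if j ∈ J then 1 else 0) := by
    intro J
    rw [hw]
    simp only [Finset.sum_add_distrib, Finset.sum_sub_distrib]
    congr 1
    · congr 1
      rw [Finset.sum_ite_eq' J i (fun _ => (1:ℤ))]
    · rw [Finset.sum_ite_eq' J j (fun _ => (1:ℤ))]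
  have hnn : ∀ k : Fin p, (0:ℤ) ≤ (n k : ℤ) := fun k => Int.natCast_nonneg _
  have hni' : (1:ℤ) ≤ (n i : ℤ) := by exact_mod_cast hni
  refine ⟨⟨fun k => ?_, fun J => ?_⟩, ?_⟩
  · show (0:ℤ) ≤ (n k : ℤ) - (if k = i then 1 else 0) + (if k = j then 1 else 0)
    by_cases hki : k = i
    · subst hki
      rw [if_pos rfl, if_neg hij]
      omega
    · rw [if_neg hki]
      have := hnn k
      by_cases hkj : k = j
      · rw [if_pos hkj]; omega
      · rw [if_neg hkj]; omega
  · show ∑ k ∈ J, w k ≤ (rk J : ℤ)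
    rw [hsum J]
    have hle : ∑ k ∈ J, (n k : ℤ) ≤ (rk J : ℤ) := by
      have := hB.1.2 J
      simpa using this
    by_cases hjJ : j ∈ J
    · by_cases hiJ : i ∈ J
      · simp only [hjJ, hiJ, if_pos]
        omega
      · have hneq := hJ J hjJ hiJ
        simp only [hjJ, hiJ, if_pos, if_neg, not_false_iff]
        omega
    · rw [if_neg hjJ]
      by_cases hiJ : i ∈ J
      · rw [if_pos hiJ]; omega
      · rw [if_neg hiJ]; omega
  · show ∑ k, w k = (rk Finset.univ : ℤ)
    rw [hsum Finset.univ]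
    have h2 : ∑ k, (n k : ℤ) = (rk Finset.univ : ℤ) := by
      have := hB.2
      simpa using this
    simp only [Finset.mem_univ, if_pos]
    omega

end Tight

/-! ### the perturbation polytope K -/

section KSection
variable (p)

noncomputable def epsP (i : Fin p) : ℝ := 2 ^ (i : ℕ) / 4 ^ p

variable {p}

lemma epsP_pos (i : Fin p) : 0 < epsP p i := by
  unfold epsP; positivity

lemma sum_pow_lt {T : Finset (Fin p)} {c : ℕ} (hT : ∀ i ∈ T, (i : ℕ) < c) :
    ∑ i ∈ T, (2:ℝ) ^ (i:ℕ) < 2 ^ c := by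
  have h1 : ∑ i ∈ T, (2:ℝ) ^ (i:ℕ) = ∑ t ∈ T.image (fun i : Fin p => (i:ℕ)), (2:ℝ) ^ t := by
    rw [Finset.sum_image]
    intro x _ y _ hxy
    exact Fin.val_injective hxy
  have h2 : T.image (fun i : Fin p => (i:ℕ)) ⊆ Finset.range c := by
    intro t ht
    rw [Finset.mem_image] at ht
    obtain ⟨i, hi, rfl⟩ := ht
    exact Finset.mem_range.2 (hT i hi)
  have h3 : ∑ t ∈ T.image (fun i : Fin p => (i:ℕ)), (2:ℝ) ^ t
      ≤ ∑ t ∈ Finset.range c, (2:ℝ) ^ t :=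
    Finset.sum_le_sum_of_subset_of_nonneg h2 (fun t _ _ => by positivity)
  have h4 : ∑ t ∈ Finset.range c, (2:ℝ) ^ t = 2 ^ c - 1 := by
    rw [geom_sum_eq (by norm_num : (2:ℝ) ≠ 1)]
    norm_num
  rw [h1]
  calc ∑ t ∈ T.image (fun i : Fin p => (i:ℕ)), (2:ℝ) ^ t ≤ 2 ^ c - 1 := h4 ▸ h3
    _ < 2 ^ c := by linarith

lemma sum_epsP_lt_one (S : Finset (Fin p)) : ∑ i ∈ S, epsP p i < 1 := by
  unfold epsP
  rw [← Finset.sum_div]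
  rw [div_lt_one (by positivity)]
  calc ∑ i ∈ S, (2:ℝ) ^ (i:ℕ) < 2 ^ p := sum_pow_lt (fun i _ => i.2)
    _ ≤ 4 ^ p := by
      apply pow_le_pow_left₀ (by norm_num) (by norm_num)

lemma sum_epsP_lt_epsP {S : Finset (Fin p)} {i₀ : Fin p} :
    ∑ i ∈ S.filter (fun i => i < i₀), epsP p i < epsP p i₀ := by
  unfold epsP
  rw [← Finset.sum_div, div_lt_div_iff_of_pos_right (by positivity)]
  exact sum_pow_lt (fun i hi => (Finset.mem_filter.1 hi).2)

lemma epsP_nonneg (i : Fin p) : 0 ≤ epsP p i := (epsP_pos i).le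

/-- vertex of the perturbation polytope -/
noncomputable def Wpt (n : Fin p → ℕ) (S : Finset (Fin p)) (τ : Fin p → Fin p) : Fin p → ℝ :=
  fun k => (n k : ℝ) + ∑ i ∈ S, epsP p i *
    ((if τ i = k then 1 else 0) - (if i = k then 1 else 0))

lemma sum_Wpt (n : Fin p → ℕ) (S : Finset (Fin p)) (τ : Fin p → Fin p) (J : Finset (Fin p)) :
    ∑ k ∈ J, Wpt n S τ k = (∑ k ∈ J, (n k : ℝ)) + ∑ i ∈ S, epsP p i *
      ((if τ i ∈ J then 1 else 0) - (if i ∈ J then 1 else 0)) := by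
  unfold Wpt
  rw [Finset.sum_add_distrib]
  congr 1
  rw [Finset.sum_comm]
  refine Finset.sum_congr rfl fun i _ => ?_
  rw [← Finset.mul_sum, Finset.sum_sub_distrib,
    Finset.sum_ite_eq J (τ i) (fun _ => (1:ℝ)), Finset.sum_ite_eq J i (fun _ => (1:ℝ))]

end KSection


lemma move_sum (n : Fin p → ℕ) (i j : Fin p) (J : Finset (Fin p)) :
    ∑ k ∈ J, ((n k : ℤ) - (if k = i then 1 else 0) + (if k = j then 1 else 0))
      = ∑ k ∈ J, (n k : ℤ) - (if i ∈ J then 1 else 0) + (if j ∈ J then 1 else 0) := by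
  simp only [Finset.sum_add_distrib, Finset.sum_sub_distrib]
  congr 1
  · congr 1
    rw [Finset.sum_ite_eq' J i (fun _ => (1:ℤ))]
  · rw [Finset.sum_ite_eq' J j (fun _ => (1:ℤ))]

def TTgood (S : Finset (Fin p)) : Type _ := {τ : Fin p → Fin p // ∀ i ∈ S, i < τ i}

noncomputable instance (S : Finset (Fin p)) : Fintype (TTgood S) := by
  unfold TTgood; infer_instance

noncomputable def PhiK (n : Fin p → ℕ) (S : Finset (Fin p)) :
    ((TTgood S) → ℝ) →ₗ[ℝ] (Fin p → ℝ) where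
  toFun := fun l => ∑ τ : TTgood S, l τ • Wpt n S τ.1
  map_add' := by
    intro x y
    simp only [Pi.add_apply, add_smul]
    rw [Finset.sum_add_distrib]
  map_smul' := by
    intro c x
    simp only [Pi.smul_apply, smul_eq_mul, RingHom.id_apply, mul_smul]
    rw [Finset.smul_sum]

noncomputable def KK (n : Fin p → ℕ) (S : Finset (Fin p)) : Set (Fin p → ℝ) :=
  (PhiK n S) '' stdSimplex ℝ (TTgood S)

lemma KK_convex (n : Fin p → ℕ) (S : Finset (Fin p)) : Convex ℝ (KK n S) :=
  (convex_stdSimplex ℝ _).linear_image (PhiK n S)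

lemma KK_compact (n : Fin p → ℕ) (S : Finset (Fin p)) : IsCompact (KK n S) :=
  (isCompact_stdSimplex ℝ _).image (PhiK n S).continuous_of_finiteDimensional

lemma BaseSet_convex (rk : Finset (Fin p) → ℕ) : Convex ℝ (BaseSet rk) := by
  intro x hx y hy α β hα hβ hαβ
  obtain ⟨hx1, hx2, hx3⟩ := hx
  obtain ⟨hy1, hy2, hy3⟩ := hy
  refine ⟨fun i => ?_, ?_, fun J => ?_⟩
  · have := mul_nonneg hα (hx1 i)
    have := mul_nonneg hβ (hy1 i)
    simp only [Pi.add_apply, Pi.smul_apply, smul_eq_mul]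
    linarith
  · simp only [Pi.add_apply, Pi.smul_apply, smul_eq_mul]
    rw [Finset.sum_add_distrib, ← Finset.mul_sum, ← Finset.mul_sum, hx2, hy2, ← add_mul, hαβ,
      one_mul]
  · simp only [Pi.add_apply, Pi.smul_apply, smul_eq_mul]
    rw [Finset.sum_add_distrib, ← Finset.mul_sum, ← Finset.mul_sum]
    calc α * (∑ j ∈ J, x j) + β * (∑ j ∈ J, y j) ≤ α * (rk J : ℝ) + β * (rk J : ℝ) := by
          have h1 := mul_le_mul_of_nonneg_left (hx3 J) hα
          have h2 := mul_le_mul_of_nonneg_left (hy3 J) hβ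
          linarith
      _ = (rk J : ℝ) := by rw [← add_mul, hαβ, one_mul]

lemma BaseSet_closed (rk : Finset (Fin p) → ℕ) : IsClosed (BaseSet rk) := by
  have : BaseSet rk = (⋂ i : Fin p, {v : Fin p → ℝ | 0 ≤ v i}) ∩
      ({v : Fin p → ℝ | ∑ i, v i = (rk Finset.univ : ℝ)} ∩
       ⋂ J : Finset (Fin p), {v : Fin p → ℝ | ∑ j ∈ J, v j ≤ (rk J : ℝ)}) := by
    ext v
    simp only [BaseSet, Set.mem_setOf_eq, Set.mem_inter_iff, Set.mem_iInter]
    try tauto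
  rw [this]
  refine IsClosed.inter (isClosed_iInter fun i => ?_) (IsClosed.inter ?_
    (isClosed_iInter fun J => ?_))
  · exact isClosed_le continuous_const (continuous_apply i)
  · exact isClosed_eq (continuous_finset_sum _ fun i _ => continuous_apply i) continuous_const
  · exact isClosed_le (continuous_finset_sum _ fun i _ => continuous_apply i) continuous_const

/-- The key geometric lemma: the cave product condition for `(n, S)` holds iff the base
polytope meets the perturbation polytope `KK n S`. -/
lemma baseK {m : Fin p → ℕ} {rk : Finset (Fin p) → ℕ} (hrk : IsPolymatroid m rk)
    (n : Fin p → ℕ) (S : Finset (Fin p)) :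
    (inBase rk (fun k => (n k : ℤ)) ∧ ∀ i ∈ S, ∃ j, i < j ∧ inBase rk
      (fun k => (n k : ℤ) - (if k = i then 1 else 0) + (if k = j then 1 else 0)))
    ↔ (BaseSet rk ∩ KK n S).Nonempty := by
  constructor
  · rintro ⟨hB, hS⟩
    -- choose witnesses
    have hch : ∀ i : Fin p, ∃ j : Fin p, (i ∈ S → (i < j ∧ inBase rk
        (fun k => (n k : ℤ) - (if k = i then 1 else 0) + (if k = j then 1 else 0)))) := by
      intro i
      by_cases hi : i ∈ S
      · obtain ⟨j, hj⟩ := hS i hi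
        exact ⟨j, fun _ => hj⟩
      · exact ⟨i, fun h => absurd h hi⟩
    choose τ₀ hτ₀ using hch
    have hτmem : ∀ i ∈ S, i < τ₀ i := fun i hi => (hτ₀ i hi).1
    set τs : TTgood S := ⟨τ₀, hτmem⟩ with hτs
    set l : TTgood S → ℝ := fun τ => if τ = τs then 1 else 0 with hl
    have hlmem : l ∈ stdSimplex ℝ (TTgood S) := by
      constructor
      · intro τ
        rw [hl]
        by_cases h : τ = τs <;> simp [h]
      · rw [hl]
        rw [Finset.sum_ite_eq' Finset.univ τs (fun _ => (1:ℝ))]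
        simp
    have himg : PhiK n S l = Wpt n S τ₀ := by
      show ∑ τ : TTgood S, l τ • Wpt n S τ.1 = Wpt n S τ₀
      rw [hl]
      have : ∀ τ : TTgood S, (if τ = τs then (1:ℝ) else 0) • Wpt n S τ.1
          = if τ = τs then Wpt n S τ.1 else 0 := by
        intro τ
        by_cases h : τ = τs <;> simp [h]
      rw [Finset.sum_congr rfl (fun τ _ => this τ),
        Finset.sum_ite_eq' Finset.univ τs (fun τ => Wpt n S τ.1)]
      simp [hτs]
      intro h
      exact absurd (Finset.mem_univ _) h
    -- basic facts
    have hn1 : ∀ i ∈ S, 1 ≤ n i := by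
      intro i hi
      have h2 : (0:ℤ) ≤ (n i : ℤ) - (if i = i then 1 else 0) + (if i = τ₀ i then 1 else 0) :=
        (hτ₀ i hi).2.1.1 i
      rw [if_pos rfl, if_neg (ne_of_lt (hτ₀ i hi).1)] at h2
      omega
    have hindℤ : ∀ J : Finset (Fin p), ∑ k ∈ J, (n k : ℤ) ≤ (rk J : ℤ) := hB.1.2
    refine ⟨Wpt n S τ₀, ?_, ⟨l, hlmem, himg⟩⟩
    refine ⟨fun k => ?_, ?_, fun J => ?_⟩
    -- nonnegativity
    · show 0 ≤ (n k : ℝ) + ∑ i ∈ S, epsP p i *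
        ((if τ₀ i = k then 1 else 0) - (if i = k then 1 else 0))
      have hterm : ∀ i ∈ S, -(if i = k then epsP p i else 0) ≤ epsP p i *
          ((if τ₀ i = k then 1 else 0) - (if i = k then 1 else 0)) := by
        intro i _
        have he := (epsP_pos (p := p) i).le
        by_cases h1 : i = k
        · rw [if_pos h1, if_pos h1]
          by_cases h2 : τ₀ i = k
          · rw [if_pos h2]; nlinarith
          · rw [if_neg h2]; nlinarith
        · rw [if_neg h1, if_neg h1]
          by_cases h2 : τ₀ i = k
          · rw [if_pos h2]; nlinarith
          · rw [if_neg h2]; nlinarith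
      have hsumge : -(if k ∈ S then epsP p k else 0) ≤ ∑ i ∈ S, epsP p i *
          ((if τ₀ i = k then 1 else 0) - (if i = k then 1 else 0)) := by
        calc -(if k ∈ S then epsP p k else 0)
            = -(∑ i ∈ S, if i = k then epsP p i else 0) := by
              rw [Finset.sum_ite_eq' S k (fun i => epsP p i)]
          _ = ∑ i ∈ S, -(if i = k then epsP p i else 0) := by
              rw [Finset.sum_neg_distrib]
          _ ≤ _ := Finset.sum_le_sum hterm
      by_cases hk : k ∈ S
      · have h1 : (1:ℝ) ≤ (n k : ℝ) := by exact_mod_cast hn1 k hk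
        have h2 : epsP p k < 1 := by
          have := sum_epsP_lt_one (p := p) {k}
          simpa using this
        rw [if_pos hk] at hsumge
        linarith
      · rw [if_neg hk] at hsumge
        have : (0:ℝ) ≤ (n k : ℝ) := by positivity
        linarith
    -- total sum
    · show ∑ k, Wpt n S τ₀ k = (rk Finset.univ : ℝ)
      rw [sum_Wpt]
      have h1 : ∑ i ∈ S, epsP p i * ((if τ₀ i ∈ Finset.univ then (1:ℝ) else 0)
          - (if i ∈ Finset.univ then 1 else 0)) = 0 := by
        refine Finset.sum_eq_zero fun i _ => ?_
        simp
      rw [h1, add_zero]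
      have := hB.2
      have h2 : ((∑ k, n k : ℕ) : ℝ) = (rk Finset.univ : ℝ) := by
        have h3 : ((∑ k, n k : ℕ) : ℤ) = (rk Finset.univ : ℤ) := by
          push_cast
          simpa using this
        exact_mod_cast h3
      rw [← h2]
      push_cast
      rfl
    -- inequalities
    · show ∑ k ∈ J, Wpt n S τ₀ k ≤ (rk J : ℝ)
      rw [sum_Wpt]
      by_cases htight : ∑ k ∈ J, (n k : ℤ) = (rk J : ℤ)
      · have hT : ∑ i ∈ S, epsP p i * ((if τ₀ i ∈ J then (1:ℝ) else 0)
            - (if i ∈ J then 1 else 0)) ≤ 0 := by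
          refine Finset.sum_nonpos fun i hi => ?_
          have he := (epsP_pos (p := p) i).le
          by_cases h1 : τ₀ i ∈ J
          · by_cases h2 : i ∈ J
            · rw [if_pos h1, if_pos h2]; nlinarith
            · exfalso
              have hcon : ∑ k ∈ J, ((n k : ℤ) - (if k = i then 1 else 0)
                  + (if k = τ₀ i then 1 else 0)) ≤ (rk J : ℤ) := (hτ₀ i hi).2.1.2 J
              rw [move_sum, if_neg h2, if_pos h1] at hcon
              omega
          · rw [if_neg h1]
            by_cases h2 : i ∈ J
            · rw [if_pos h2]; nlinarith
            · rw [if_neg h2]; nlinarith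
        have hJr : (∑ k ∈ J, (n k : ℝ)) = (rk J : ℝ) := by exact_mod_cast htight
        linarith
      · have hlt : ∑ k ∈ J, (n k : ℤ) ≤ (rk J : ℤ) - 1 := by
          have := hindℤ J
          omega
        have hltR : (∑ k ∈ J, (n k : ℝ)) ≤ (rk J : ℝ) - 1 := by exact_mod_cast hlt
        have hT : ∑ i ∈ S, epsP p i * ((if τ₀ i ∈ J then (1:ℝ) else 0)
            - (if i ∈ J then 1 else 0)) ≤ ∑ i ∈ S, epsP p i := by
          refine Finset.sum_le_sum fun i _ => ?_
          have he := (epsP_pos i (p := p)).le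
          by_cases h1 : τ₀ i ∈ J <;> by_cases h2 : i ∈ J <;> simp [h1, h2] <;> nlinarith
        have := sum_epsP_lt_one (p := p) S
        linarith
  · rintro ⟨x, hxB, l, hlstd, hlx⟩
    have hl0 : ∀ τ : TTgood S, 0 ≤ l τ := hlstd.1
    have hl1 : ∑ τ : TTgood S, l τ = 1 := hlstd.2
    have hxk : ∀ k, x k = ∑ τ : TTgood S, l τ * Wpt n S τ.1 k := by
      intro k
      rw [← hlx]
      show (∑ τ : TTgood S, l τ • Wpt n S τ.1) k = _
      rw [Finset.sum_apply]
      exact Finset.sum_congr rfl fun τ _ => rfl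
    set Z : Fin p → Finset (Fin p) → ℝ :=
      fun i J => ∑ τ : TTgood S, l τ * (if τ.1 i ∈ J then 1 else 0) with hZ
    have hZ0 : ∀ i J, 0 ≤ Z i J := by
      intro i J
      refine Finset.sum_nonneg fun τ _ => ?_
      by_cases h : τ.1 i ∈ J
      · rw [if_pos h, mul_one]; exact hl0 τ
      · rw [if_neg h, mul_zero]
    have hZ1le : ∀ i J, Z i J ≤ 1 := by
      intro i J
      rw [← hl1]
      refine Finset.sum_le_sum fun τ _ => ?_
      by_cases h : τ.1 i ∈ J
      · rw [if_pos h, mul_one]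
      · rw [if_neg h, mul_zero]; exact hl0 τ
    have hZ1 : ∀ i J, (∀ τ : TTgood S, τ.1 i ∈ J) → Z i J = 1 := by
      intro i J hall
      rw [hZ]
      calc ∑ τ : TTgood S, l τ * (if τ.1 i ∈ J then (1:ℝ) else 0)
          = ∑ τ : TTgood S, l τ := by
            refine Finset.sum_congr rfl fun τ _ => ?_
            rw [if_pos (hall τ), mul_one]
        _ = 1 := hl1
    have hxsum : ∀ J : Finset (Fin p), ∑ k ∈ J, x k = (∑ k ∈ J, (n k : ℝ))
        + ∑ i ∈ S, epsP p i * (Z i J - (if i ∈ J then 1 else 0)) := by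
      intro J
      calc ∑ k ∈ J, x k = ∑ k ∈ J, ∑ τ : TTgood S, l τ * Wpt n S τ.1 k :=
            Finset.sum_congr rfl fun k _ => hxk k
        _ = ∑ τ : TTgood S, ∑ k ∈ J, l τ * Wpt n S τ.1 k := Finset.sum_comm
        _ = ∑ τ : TTgood S, l τ * ((∑ k ∈ J, (n k : ℝ)) + ∑ i ∈ S, epsP p i *
            ((if τ.1 i ∈ J then 1 else 0) - (if i ∈ J then 1 else 0))) := by
            refine Finset.sum_congr rfl fun τ _ => ?_
            rw [← Finset.mul_sum, sum_Wpt]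
        _ = (∑ τ : TTgood S, l τ * (∑ k ∈ J, (n k : ℝ)))
            + ∑ τ : TTgood S, ∑ i ∈ S, epsP p i *
              (l τ * (if τ.1 i ∈ J then 1 else 0) - l τ * (if i ∈ J then 1 else 0)) := by
            rw [← Finset.sum_add_distrib]
            refine Finset.sum_congr rfl fun τ _ => ?_
            rw [mul_add]
            congr 1
            rw [Finset.mul_sum]
            refine Finset.sum_congr rfl fun i _ => ?_
            ring
        _ = (∑ k ∈ J, (n k : ℝ)) + ∑ i ∈ S, epsP p i * (Z i J - (if i ∈ J then 1 else 0)) := by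
            have e1 : (∑ τ : TTgood S, l τ * (∑ k ∈ J, (n k : ℝ))) = ∑ k ∈ J, (n k : ℝ) := by
              rw [← Finset.sum_mul, hl1, one_mul]
            have e2 : (∑ τ : TTgood S, ∑ i ∈ S, epsP p i *
                  (l τ * (if τ.1 i ∈ J then 1 else 0) - l τ * (if i ∈ J then 1 else 0)))
                = ∑ i ∈ S, epsP p i * (Z i J - (if i ∈ J then 1 else 0)) := by
              rw [Finset.sum_comm]
              refine Finset.sum_congr rfl fun i _ => ?_
              rw [hZ]
              rw [← Finset.mul_sum, Finset.sum_sub_distrib, ← Finset.sum_mul, hl1, one_mul]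
            rw [e1, e2]
    have hsl1 : ∑ i ∈ S, epsP p i < 1 := sum_epsP_lt_one S
    have hpertbdd : ∀ J : Finset (Fin p),
        |∑ i ∈ S, epsP p i * (Z i J - (if i ∈ J then 1 else 0))| ≤ ∑ i ∈ S, epsP p i := by
      intro J
      refine (Finset.abs_sum_le_sum_abs _ _).trans ?_
      refine Finset.sum_le_sum fun i _ => ?_
      have he := (epsP_pos (p := p) i).le
      rw [abs_mul, abs_of_nonneg he]
      have h1 : |Z i J - (if i ∈ J then 1 else 0)| ≤ 1 := by
        have := hZ0 i J
        have := hZ1le i J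
        by_cases h : i ∈ J
        · rw [if_pos h]; rw [abs_le]; constructor <;> linarith
        · rw [if_neg h]; rw [abs_le]; constructor <;> linarith
      nlinarith
    -- (a) `n` is in the base
    have hBn : inBase rk (fun k => (n k : ℤ)) := by
      have hsumu : (∑ k, (n k : ℝ)) = (rk Finset.univ : ℝ) := by
        have h1 := hxsum Finset.univ
        have h2 : ∑ i ∈ S, epsP p i * (Z i Finset.univ
            - (if i ∈ Finset.univ then 1 else 0)) = 0 := by
          refine Finset.sum_eq_zero fun i _ => ?_
          rw [hZ1 i Finset.univ (fun τ => Finset.mem_univ _), if_pos (Finset.mem_univ i)]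
          ring
        rw [h2, add_zero] at h1
        rw [← h1]
        exact hxB.2.1
      refine ⟨⟨fun k => Int.natCast_nonneg _, fun J => ?_⟩, ?_⟩
      · show ∑ j ∈ J, (n j : ℤ) ≤ (rk J : ℤ)
        have h1 := hxsum J
        have h2 := hxB.2.2 J
        have h3 := hpertbdd J
        have h4 : (∑ k ∈ J, (n k : ℝ)) < (rk J : ℝ) + 1 := by
          have := abs_le.1 h3
          linarith [this.1]
        have h5 : (∑ k ∈ J, (n k : ℤ) : ℤ) < (rk J : ℤ) + 1 := by exact_mod_cast h4
        omega
      · show ∑ i, (n i : ℤ) = (rk Finset.univ : ℤ)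
        exact_mod_cast hsumu
    refine ⟨hBn, ?_⟩
    by_contra hbad
    push_neg at hbad
    set Bad : Finset (Fin p) := S.filter (fun i => ¬ ∃ j, i < j ∧ inBase rk
      (fun k => (n k : ℤ) - (if k = i then 1 else 0) + (if k = j then 1 else 0))) with hBad
    have hBadne : Bad.Nonempty := by
      obtain ⟨i, hiS, hi⟩ := hbad
      refine ⟨i, Finset.mem_filter.2 ⟨hiS, ?_⟩⟩
      push_neg
      exact hi
    set i₀ : Fin p := Bad.max' hBadne with hi₀
    have hi₀Bad : i₀ ∈ Bad := Bad.max'_mem hBadne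
    have hi₀S : i₀ ∈ S := (Finset.mem_filter.1 hi₀Bad).1
    have hi₀no : ∀ j, i₀ < j → ¬ inBase rk
        (fun k => (n k : ℤ) - (if k = i₀ then 1 else 0) + (if k = j then 1 else 0)) := by
      have := (Finset.mem_filter.1 hi₀Bad).2
      push_neg at this
      exact this
    -- n i₀ ≥ 1
    have hτgt : ∀ τ : TTgood S, i₀ < τ.1 i₀ := fun τ => τ.2 i₀ hi₀S
    have hδ : ∑ i ∈ S.filter (fun i => i < i₀), epsP p i < epsP p i₀ := sum_epsP_lt_epsP
    have hni₀ : 1 ≤ n i₀ := by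
      have hx0 : (0:ℝ) ≤ x i₀ := hxB.1 i₀
      have hxle : x i₀ ≤ (n i₀ : ℝ) - epsP p i₀ + ∑ i ∈ S.filter (fun i => i < i₀), epsP p i := by
        rw [hxk i₀]
        have hW : ∀ τ : TTgood S, Wpt n S τ.1 i₀ ≤ (n i₀ : ℝ) - epsP p i₀
            + ∑ i ∈ S.filter (fun i => i < i₀), epsP p i := by
          intro τ
          show (n i₀ : ℝ) + ∑ i ∈ S, epsP p i *
              ((if τ.1 i = i₀ then 1 else 0) - (if i = i₀ then 1 else 0)) ≤ _
          have hsplit : ∑ i ∈ S, epsP p i *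
              ((if τ.1 i = i₀ then 1 else 0) - (if i = i₀ then 1 else 0))
              ≤ - epsP p i₀ + ∑ i ∈ S.filter (fun i => i < i₀), epsP p i := by
            have hin : epsP p i₀ * ((if τ.1 i₀ = i₀ then 1 else 0) - (if i₀ = i₀ then 1 else 0))
                + ∑ i ∈ S.erase i₀, epsP p i *
                  ((if τ.1 i = i₀ then 1 else 0) - (if i = i₀ then 1 else 0))
                = ∑ i ∈ S, epsP p i *
                  ((if τ.1 i = i₀ then 1 else 0) - (if i = i₀ then 1 else 0)) :=
              Finset.add_sum_erase S (fun i => epsP p i *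
                ((if τ.1 i = i₀ then (1:ℝ) else 0) - (if i = i₀ then 1 else 0))) hi₀S
            rw [← hin, if_neg (ne_of_gt (hτgt τ)), if_pos rfl]
            have h2 : ∑ i ∈ S.erase i₀, epsP p i *
                ((if τ.1 i = i₀ then 1 else 0) - (if i = i₀ then 1 else 0))
                ≤ ∑ i ∈ S.erase i₀, (if i < i₀ then epsP p i else 0) := by
              refine Finset.sum_le_sum fun i hi => ?_
              have hine : i ≠ i₀ := Finset.ne_of_mem_erase hi
              have hiS : i ∈ S := Finset.mem_of_mem_erase hi
              rw [if_neg hine]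
              have he := (epsP_pos (p := p) i).le
              by_cases h3 : τ.1 i = i₀
              · have h4 : i < i₀ := h3 ▸ τ.2 i hiS
                rw [if_pos h3, if_pos h4]
                nlinarith
              · rw [if_neg h3]
                by_cases h4 : i < i₀
                · rw [if_pos h4]; nlinarith
                · rw [if_neg h4]; nlinarith
            have h5 : ∑ i ∈ S.erase i₀, (if i < i₀ then epsP p i else 0)
                ≤ ∑ i ∈ S.filter (fun i => i < i₀), epsP p i := by
              rw [Finset.sum_ite, Finset.sum_const_zero, add_zero]
              refine Finset.sum_le_sum_of_subset_of_nonneg ?_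
                (fun i _ _ => (epsP_pos (p := p) i).le)
              intro i hi
              rw [Finset.mem_filter] at hi ⊢
              exact ⟨Finset.mem_of_mem_erase hi.1, hi.2⟩
            linarith
          linarith
        calc ∑ τ : TTgood S, l τ * Wpt n S τ.1 i₀
            ≤ ∑ τ : TTgood S, l τ * ((n i₀ : ℝ) - epsP p i₀
              + ∑ i ∈ S.filter (fun i => i < i₀), epsP p i) := by
              refine Finset.sum_le_sum fun τ _ => ?_
              exact mul_le_mul_of_nonneg_left (hW τ) (hl0 τ)
          _ = (n i₀ : ℝ) - epsP p i₀ + ∑ i ∈ S.filter (fun i => i < i₀), epsP p i := by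
              rw [← Finset.sum_mul, hl1, one_mul]
      have h6 : (0:ℝ) < (n i₀ : ℝ) := by linarith
      have h7 : 0 < n i₀ := by exact_mod_cast h6
      omega
    -- tight sets
    have hindn : ∀ J : Finset (Fin p), ∑ k ∈ J, (n k : ℤ) ≤ (rk J : ℤ) := hBn.1.2
    have hex : ∀ j : Fin p, i₀ < j → ∃ J : Finset (Fin p), j ∈ J ∧ i₀ ∉ J
        ∧ ∑ k ∈ J, (n k : ℤ) = rk J :=
      fun j hj => exchange_tight hrk hBn (ne_of_lt hj) hni₀ (hi₀no j hj)
    choose! Jf hJ1 hJ2 hJ3 using hex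
    set J₀ : Finset (Fin p) := (Finset.univ.filter (fun j => i₀ < j)).biUnion Jf with hJ₀
    have htight₀ : ∑ k ∈ J₀, (n k : ℤ) = rk J₀ :=
      tight_biUnion hrk hindn _ Jf (fun b hb => hJ3 b (Finset.mem_filter.1 hb).2)
    have hmemJ₀ : ∀ j, i₀ < j → j ∈ J₀ := by
      intro j hj
      exact Finset.mem_biUnion.2 ⟨j, Finset.mem_filter.2 ⟨Finset.mem_univ j, hj⟩, hJ1 j hj⟩
    have hi₀not : i₀ ∉ J₀ := by
      intro hmem
      obtain ⟨b, hb, hmem2⟩ := Finset.mem_biUnion.1 hmem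
      exact hJ2 b (Finset.mem_filter.1 hb).2 hmem2
    -- the contradiction
    have hTle : ∑ i ∈ S, epsP p i * (Z i J₀ - (if i ∈ J₀ then 1 else 0)) ≤ 0 := by
      have h1 := hxsum J₀
      have h2 := hxB.2.2 J₀
      have h3 : (∑ k ∈ J₀, (n k : ℝ)) = (rk J₀ : ℝ) := by exact_mod_cast htight₀
      linarith
    have hTgt : 0 < ∑ i ∈ S, epsP p i * (Z i J₀ - (if i ∈ J₀ then 1 else 0)) := by
      have hin : epsP p i₀ * (Z i₀ J₀ - (if i₀ ∈ J₀ then 1 else 0))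
          + ∑ i ∈ S.erase i₀, epsP p i * (Z i J₀ - (if i ∈ J₀ then 1 else 0))
          = ∑ i ∈ S, epsP p i * (Z i J₀ - (if i ∈ J₀ then 1 else 0)) :=
        Finset.add_sum_erase S (fun i => epsP p i * (Z i J₀ - (if i ∈ J₀ then 1 else 0))) hi₀S
      rw [← hin]
      have hZi₀ : Z i₀ J₀ = 1 := hZ1 i₀ J₀ (fun τ => hmemJ₀ _ (hτgt τ))
      rw [hZi₀, if_neg hi₀not]
      have h2 : ∑ i ∈ S.erase i₀, epsP p i * (Z i J₀ - (if i ∈ J₀ then 1 else 0))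
          ≥ ∑ i ∈ S.erase i₀, (if i < i₀ then -(epsP p i) else 0) := by
        refine Finset.sum_le_sum fun i hi => ?_
        have hine : i ≠ i₀ := Finset.ne_of_mem_erase hi
        have hiS : i ∈ S := Finset.mem_of_mem_erase hi
        have he := (epsP_pos (p := p) i).le
        have hz0 := hZ0 i J₀
        have hz1 := hZ1le i J₀
        by_cases h4 : i < i₀
        · rw [if_pos h4]
          by_cases h5 : i ∈ J₀
          · rw [if_pos h5]; nlinarith
          · rw [if_neg h5]; nlinarith
        · have h6 : i₀ < i := lt_of_le_of_ne (not_lt.1 h4) (Ne.symm hine)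
          rw [if_neg h4]
          have hmi : i ∈ J₀ := hmemJ₀ i h6
          have hZi : Z i J₀ = 1 := hZ1 i J₀ (fun τ => hmemJ₀ _ (lt_trans h6 (τ.2 i hiS)))
          rw [hZi, if_pos hmi]
          simp
      have h3 : ∑ i ∈ S.erase i₀, (if i < i₀ then -(epsP p i) else 0)
          ≥ -(∑ i ∈ S.filter (fun i => i < i₀), epsP p i) := by
        have h4 : ∑ i ∈ S.erase i₀, (if i < i₀ then -(epsP p i) else 0)
            = -(∑ i ∈ (S.erase i₀).filter (fun i => i < i₀), epsP p i) := by
          rw [Finset.sum_ite, Finset.sum_const_zero, add_zero, ← Finset.sum_neg_distrib]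
        rw [h4]
        have h5 : ∑ i ∈ (S.erase i₀).filter (fun i => i < i₀), epsP p i
            ≤ ∑ i ∈ S.filter (fun i => i < i₀), epsP p i := by
          refine Finset.sum_le_sum_of_subset_of_nonneg ?_
            (fun i _ _ => (epsP_pos (p := p) i).le)
          intro i hi
          rw [Finset.mem_filter] at hi ⊢
          exact ⟨Finset.mem_of_mem_erase hi.1, hi.2⟩
        linarith
      linarith
    linarith


lemma cmax_zero {rk : Finset (Fin p) → ℕ} (n : Fin p → ℕ) {i : Fin p}
    (hi : ¬ (i : ℕ) < p - 1) : cmax rk n i = 0 := by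
  rw [cmax, if_neg]
  rintro ⟨j, hij, -⟩
  have h1 := i.2
  have h2 := j.2
  have h3 : (i : ℕ) < (j : ℕ) := hij
  omega

lemma cavePoly_box {m : Fin p → ℕ} {rk : Finset (Fin p) → ℕ} (hrk : IsPolymatroid m rk) :
    cavePoly rk = ∑ n ∈ Fintype.piFinset (fun _ : Fin p => Finset.range ((Finset.univ.sup m) + 1)),
      MvPolynomial.C (baseInd rk (fun i => (n i : ℤ))) *
        ∏ i : Fin p,
          if (i : ℕ) < p - 1 then
            MvPolynomial.X i ^ (n i) -
              MvPolynomial.C (cmax rk n i) * MvPolynomial.X i ^ (n i - 1)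
          else MvPolynomial.X i ^ (n i) := by
  classical
  set M := Finset.univ.sup m with hM
  set f : (Fin p → ℕ) → MvPolynomial (Fin p) ℤ := fun n =>
    MvPolynomial.C (baseInd rk (fun i => (n i : ℤ))) *
      ∏ i : Fin p,
        if (i : ℕ) < p - 1 then
          MvPolynomial.X i ^ (n i) -
            MvPolynomial.C (cmax rk n i) * MvPolynomial.X i ^ (n i - 1)
        else MvPolynomial.X i ^ (n i) with hf
  have hf0 : ∀ n : Fin p → ℕ, ¬ inBase rk (fun i => (n i : ℤ)) → f n = 0 := by
    intro n hn
    rw [hf]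
    simp only [baseInd, if_neg hn, map_zero, zero_mul]
  show ∑ n ∈ Finset.Nat.antidiagonalTuple p (rk Finset.univ), f n
      = ∑ n ∈ Fintype.piFinset (fun _ : Fin p => Finset.range (M + 1)), f n
  set D := Finset.Nat.antidiagonalTuple p (rk Finset.univ) with hD
  set BB := Fintype.piFinset (fun _ : Fin p => Finset.range (M + 1)) with hBB
  have h1 : ∑ n ∈ D, f n = ∑ n ∈ D ∩ BB, f n := by
    refine (Finset.sum_subset Finset.inter_subset_left ?_).symm
    intro n hnD hn
    have hnB : n ∉ BB := fun hc => hn (Finset.mem_inter.2 ⟨hnD, hc⟩)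
    rw [Fintype.mem_piFinset] at hnB
    push_neg at hnB
    obtain ⟨j, hj⟩ := hnB
    rw [Finset.mem_range] at hj
    push_neg at hj
    refine hf0 n fun hB => ?_
    have h2 := hB.1.2 {j}
    rw [Finset.sum_singleton] at h2
    have h3 : rk {j} ≤ m j := hrk.2.2.2 j
    have h4 : m j ≤ M := Finset.le_sup (Finset.mem_univ j)
    have h5 : (n j : ℤ) ≤ (rk {j} : ℤ) := h2
    have : n j ≤ rk {j} := by exact_mod_cast h5
    omega
  have h2 : ∑ n ∈ BB, f n = ∑ n ∈ D ∩ BB, f n := by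
    refine (Finset.sum_subset Finset.inter_subset_right ?_).symm
    intro n hnB hn
    have hnD : n ∉ D := fun hc => hn (Finset.mem_inter.2 ⟨hc, hnB⟩)
    rw [hD, Finset.Nat.mem_antidiagonalTuple] at hnD
    refine hf0 n fun hB => ?_
    have h3 := hB.2
    have h4 : ((∑ i, n i : ℕ) : ℤ) = (rk Finset.univ : ℤ) := by
      push_cast
      simpa using h3
    exact hnD (by exact_mod_cast h4)
  rw [h1, h2]

/-- The assignment `𝒫 ↦ cave_𝒫` is valuative: if a `ℤ`-linear
combination of indicator functions of base polytopes of polymatroids (with a common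
cage `m`) vanishes identically on `ℝ^p`, then the same linear combination of cave
polynomials vanishes in `ℤ[t_1, …, t_p]`. -/
theorem cave_valuative
    (p : ℕ) (hp : 1 ≤ p) (m : Fin p → ℕ) (k : ℕ)
    (P : Fin k → Finset (Fin p) → ℕ) (hP : ∀ i, IsPolymatroid m (P i))
    (a : Fin k → ℤ)
    (hval : ∀ v : Fin p → ℝ,
      (∑ i, a i * (if v ∈ BaseSet (P i) then (1 : ℤ) else 0)) = 0) :
    (∑ i, a i • cavePoly (P i)) = 0 := by
  classical
  -- the key scalar identity
  have key : ∀ (n : Fin p → ℕ) (S : Finset (Fin p)),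
      ∑ i, a i * (baseInd (P i) (fun k' => (n k' : ℤ)) * ∏ j ∈ S, cmax (P i) n j) = 0 := by
    intro n S
    have hcond : ∀ i, baseInd (P i) (fun k' => (n k' : ℤ)) * ∏ j ∈ S, cmax (P i) n j
        = if (BaseSet (P i) ∩ KK n S).Nonempty then 1 else 0 := by
      intro i
      have h1 : ∏ j ∈ S, cmax (P i) n j
          = if (∀ j ∈ S, ∃ j', j < j' ∧ inBase (P i)
              (fun k' => (n k' : ℤ) - (if k' = j then 1 else 0) + (if k' = j' then 1 else 0)))
            then 1 else 0 := by
        simp only [cmax]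
        rw [Finset.prod_boole]
        exact ite_congr rfl (fun _ => rfl) (fun _ => rfl)
      rw [h1, baseInd, ← baseK (hP i) n S]
      by_cases hA : inBase (P i) (fun k' => (n k' : ℤ))
      · by_cases hB : (∀ j ∈ S, ∃ j', j < j' ∧ inBase (P i)
            (fun k' => (n k' : ℤ) - (if k' = j then 1 else 0) + (if k' = j' then 1 else 0)))
        · rw [if_pos hA, if_pos hB, if_pos ⟨hA, hB⟩, one_mul]
        · rw [if_pos hA, one_mul, if_neg hB, if_neg (fun hc => hB hc.2)]
      · rw [if_neg hA, zero_mul, if_neg (fun hc => hA hc.1)]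
    calc ∑ i, a i * (baseInd (P i) (fun k' => (n k' : ℤ)) * ∏ j ∈ S, cmax (P i) n j)
        = ∑ i, a i * (if (BaseSet (P i) ∩ KK n S).Nonempty then 1 else 0) := by
          exact Finset.sum_congr rfl fun i _ => by rw [hcond i]
      _ = 0 := by
          refine chiMachine p k a (fun i => BaseSet (P i) ∩ KK n S)
            (fun i => (BaseSet_convex (P i)).inter (KK_convex n S))
            (fun i => (KK_compact n S).inter_left (BaseSet_closed (P i)))
            (fun x => ?_)
          show ∑ i, a i * (@ite ℤ (x ∈ BaseSet (P i) ∩ KK n S) (Classical.propDecidable _) 1 0) = 0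
          by_cases hxK : x ∈ KK n S
          · calc ∑ i, a i * (@ite ℤ (x ∈ BaseSet (P i) ∩ KK n S) (Classical.propDecidable _) 1 0)
                = ∑ i, a i * (if x ∈ BaseSet (P i) then (1:ℤ) else 0) := by
                  refine Finset.sum_congr rfl fun i _ => ?_
                  congr 1
                  by_cases hB : x ∈ BaseSet (P i)
                  · rw [if_pos (Set.mem_inter hB hxK), if_pos hB]
                  · rw [if_neg (fun hc => hB hc.1), if_neg hB]
              _ = 0 := hval x
          · refine Finset.sum_eq_zero fun i _ => ?_
            rw [if_neg (fun hc => hxK hc.2), mul_zero]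
  -- polynomial bookkeeping
  set M := Finset.univ.sup m with hM
  set BB := Fintype.piFinset (fun _ : Fin p => Finset.range (M + 1)) with hBB
  have hexpand : ∀ i, cavePoly (P i) = ∑ n ∈ BB, ∑ t ∈ (Finset.univ : Finset (Fin p)).powerset,
      MvPolynomial.C (baseInd (P i) (fun k' => (n k' : ℤ)) * ∏ j ∈ t, (-(cmax (P i) n j))) *
        ((∏ j ∈ t, MvPolynomial.X j ^ (n j - 1)) *
          ∏ j ∈ Finset.univ \ t, MvPolynomial.X j ^ (n j)) := by
    intro i
    rw [cavePoly_box (hP i)]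
    refine Finset.sum_congr rfl fun n _ => ?_
    have hfac : ∀ j : Fin p,
        (if (j : ℕ) < p - 1 then
          MvPolynomial.X j ^ (n j) -
            MvPolynomial.C (cmax (P i) n j) * MvPolynomial.X j ^ (n j - 1)
        else MvPolynomial.X j ^ (n j))
        = (-(MvPolynomial.C (cmax (P i) n j) * MvPolynomial.X j ^ (n j - 1)))
          + MvPolynomial.X j ^ (n j) := by
      intro j
      by_cases hj : (j : ℕ) < p - 1
      · rw [if_pos hj]; ring
      · rw [if_neg hj, cmax_zero n hj, map_zero, zero_mul, neg_zero, zero_add]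
    rw [Finset.prod_congr rfl (fun j _ => hfac j), Finset.prod_add, Finset.mul_sum]
    refine Finset.sum_congr rfl fun t _ => ?_
    have hneg : ∏ j ∈ t, (-(MvPolynomial.C (cmax (P i) n j) * MvPolynomial.X j ^ (n j - 1)))
        = MvPolynomial.C (∏ j ∈ t, (-(cmax (P i) n j))) * ∏ j ∈ t, MvPolynomial.X j ^ (n j - 1) := by
      rw [map_prod, ← Finset.prod_mul_distrib]
      refine Finset.prod_congr rfl fun j _ => ?_
      rw [map_neg, neg_mul]
    rw [hneg, map_mul]
    ring
  calc ∑ i, a i • cavePoly (P i)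
      = ∑ i, ∑ n ∈ BB, ∑ t ∈ (Finset.univ : Finset (Fin p)).powerset,
          MvPolynomial.C (a i * (baseInd (P i) (fun k' => (n k' : ℤ))
            * ∏ j ∈ t, (-(cmax (P i) n j)))) *
          ((∏ j ∈ t, MvPolynomial.X j ^ (n j - 1)) *
            ∏ j ∈ Finset.univ \ t, MvPolynomial.X j ^ (n j)) := by
        refine Finset.sum_congr rfl fun i _ => ?_
        rw [hexpand i, Finset.smul_sum]
        refine Finset.sum_congr rfl fun n _ => ?_
        rw [Finset.smul_sum]
        refine Finset.sum_congr rfl fun t _ => ?_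
        rw [← smul_mul_assoc]
        congr 1
        rw [zsmul_eq_mul,
          ← map_intCast (MvPolynomial.C : ℤ →+* MvPolynomial (Fin p) ℤ) (a i), ← map_mul,
          Int.cast_id]
    _ = ∑ n ∈ BB, ∑ t ∈ (Finset.univ : Finset (Fin p)).powerset,
          (∑ i, MvPolynomial.C (a i * (baseInd (P i) (fun k' => (n k' : ℤ))
            * ∏ j ∈ t, (-(cmax (P i) n j))))) *
          ((∏ j ∈ t, MvPolynomial.X j ^ (n j - 1)) *
            ∏ j ∈ Finset.univ \ t, MvPolynomial.X j ^ (n j)) := by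
        rw [Finset.sum_comm]
        refine Finset.sum_congr rfl fun n _ => ?_
        rw [Finset.sum_comm]
        refine Finset.sum_congr rfl fun t _ => ?_
        rw [Finset.sum_mul]
    _ = 0 := by
        refine Finset.sum_eq_zero fun n _ => ?_
        refine Finset.sum_eq_zero fun t _ => ?_
        have hz : ∑ i, MvPolynomial.C (a i * (baseInd (P i) (fun k' => (n k' : ℤ))
            * ∏ j ∈ t, (-(cmax (P i) n j)))) = (0 : MvPolynomial (Fin p) ℤ) := by
          rw [← map_sum]
          have hs : ∑ i, a i * (baseInd (P i) (fun k' => (n k' : ℤ))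
              * ∏ j ∈ t, (-(cmax (P i) n j)))
              = (-1) ^ t.card * ∑ i, a i * (baseInd (P i) (fun k' => (n k' : ℤ))
              * ∏ j ∈ t, cmax (P i) n j) := by
            rw [Finset.mul_sum]
            refine Finset.sum_congr rfl fun i _ => ?_
            have : ∏ j ∈ t, (-(cmax (P i) n j))
                = (-1) ^ t.card * ∏ j ∈ t, cmax (P i) n j := by
              calc ∏ j ∈ t, (-(cmax (P i) n j)) = ∏ j ∈ t, ((-1) * cmax (P i) n j) := by
                    refine Finset.prod_congr rfl fun j _ => by ring
                _ = (∏ _j ∈ t, (-1 : ℤ)) * ∏ j ∈ t, cmax (P i) n j := Finset.prod_mul_distrib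
                _ = (-1) ^ t.card * ∏ j ∈ t, cmax (P i) n j := by rw [Finset.prod_const]
            rw [this]
            ring
          rw [hs, key n t, mul_zero, map_zero]
        rw [hz, zero_mul]


end CavePaper
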